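/- For a ∈ [0,1) and Γ > 0, the error exponent is strictly positive: K(a,Γ) > 0. -/

import Mathlib

/-- The steady-state prediction error variance `P(a, Γ)`: the unique positive root of
`P² + (1 − a²)(1 − Γ)P − Γ(1 − a²) = 0`, given in closed form. -/
noncomputable def Pss (a Γ : ℝ) : ℝ :=
  ((1 - a ^ 2) * (Γ - 1) +
    Real.sqrt ((1 - a ^ 2) ^ 2 * (1 - Γ) ^ 2 + 4 * Γ * (1 - a ^ 2))) / 2

/-- The steady-state Kalman gain factor `K_p = a·P/(1+P)`. -/
noncomputable def Kgain (a Γ : ℝ) : ℝ := a * Pss a Γ / (1 + Pss a Γ)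

/-- `P̃ = K_p²/(1 − (a − K_p)²)`, the solution of the Lyapunov equation. -/
noncomputable def Ptilde (a Γ : ℝ) : ℝ :=
  (Kgain a Γ) ^ 2 / (1 - (a - Kgain a Γ) ^ 2)

/-- The closed-form error exponent `K(a, Γ) = ½·log(1+P) + ½·(1+P̃)/(1+P) − ½`. -/
noncomputable def Kexp (a Γ : ℝ) : ℝ :=
  (1 / 2) * Real.log (1 + Pss a Γ) + (1 / 2) * (1 + Ptilde a Γ) / (1 + Pss a Γ) - 1 / 2

lemma Pss_pos (a Γ : ℝ) (ha0 : 0 ≤ a) (ha1 : a < 1) (hΓ : 0 < Γ) : 0 < Pss a Γ := by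
  have ha2 : a ^ 2 < 1 := by nlinarith
  have hD : ((1 - a ^ 2) * (1 - Γ)) ^ 2 <
      (1 - a ^ 2) ^ 2 * (1 - Γ) ^ 2 + 4 * Γ * (1 - a ^ 2) := by nlinarith
  have h : (1 - a ^ 2) * (1 - Γ) <
      Real.sqrt ((1 - a ^ 2) ^ 2 * (1 - Γ) ^ 2 + 4 * Γ * (1 - a ^ 2)) :=
    Real.lt_sqrt_of_sq_lt hD
  unfold Pss
  nlinarith [h]

/-- For `a ∈ [0,1)` and `Γ > 0`, the error exponent is strictly positive: `K(a,Γ) > 0`. -/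
theorem errorExponent_pos (a Γ : ℝ) (ha0 : 0 ≤ a) (ha1 : a < 1) (hΓ : 0 < Γ) :
    0 < Kexp a Γ := by
  have hP : 0 < Pss a Γ := Pss_pos a Γ ha0 ha1 hΓ
  set P := Pss a Γ with hPdef
  have h1P : 0 < 1 + P := by linarith
  have hK0 : 0 ≤ Kgain a Γ := by
    unfold Kgain
    rw [← hPdef]
    positivity
  have hKa : Kgain a Γ ≤ a := by
    unfold Kgain
    rw [← hPdef, div_le_iff₀ h1P]
    nlinarith
  have hden : 0 < 1 - (a - Kgain a Γ) ^ 2 := by nlinarith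
  have hPt : 0 ≤ Ptilde a Γ := by
    unfold Ptilde
    exact div_nonneg (sq_nonneg _) hden.le
  have hlog : P / (1 + P) < Real.log (1 + P) := by
    have h1 : (0:ℝ) < 1 / (1 + P) := by positivity
    have h2 : 1 / (1 + P) ≠ 1 := by
      intro h
      rw [div_eq_one_iff_eq (by linarith)] at h
      linarith
    have := Real.log_lt_sub_one_of_pos h1 h2
    rw [Real.log_div one_ne_zero (by linarith), Real.log_one] at this
    have heq : 1 / (1 + P) - 1 = -(P / (1 + P)) := by field_simp; ring
    linarith [heq ▸ this]
  have hkey : Kexp a Γ = (Real.log (1 + P) * (1 + P) + Ptilde a Γ - P) / (2 * (1 + P)) := by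
    unfold Kexp
    rw [← hPdef]
    field_simp
    ring
  rw [hkey]
  apply div_pos _ (by linarith)
  have : P < Real.log (1 + P) * (1 + P) := by
    rw [div_lt_iff₀ h1P] at hlog
    linarith
  linarith
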